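/- The 2×3 interval matrix μ with first row ([−3, 1/3], [2, 4], [0, 1]) and second row ([1, 1], [−1, 3], [1, 1]) contains no matrix of rank 1, although for every h with 2 ≤ h ≤ 2^{min{2,3}−1}, all indices i₁,…,i_h ∈ {1,2}, j₁,…,j_h ∈ {1,2,3}, and every permutation σ of {1,…,h}, the interval product μ_{i₁,j₁}·…·μ_{i_h,j_h} has nonempty intersection with the interval product μ_{i₁,j_{σ(1)}}·…·μ_{i_h,j_{σ(h)}}. -/

import Mathlib

/-- The lower-bound matrix of the counterexample. -/
noncomputable def mEx : Matrix (Fin 2) (Fin 3) ℝ := !![-3, 2, 0; 1, -1, 1]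

/-- The upper-bound matrix of the counterexample. -/
noncomputable def MEx : Matrix (Fin 2) (Fin 3) ℝ := !![1/3, 4, 1; 1, 3, 1]

/-- Witness matrices: for each ordered pair of columns `(j0, j1)`, a matrix in the
interval matrix μ whose corresponding 2×2 minor vanishes. -/
noncomputable def CEx : Fin 3 → Fin 3 → Matrix (Fin 2) (Fin 3) ℝ :=
  ![![!![0, 2, 0; 1, -1, 1], !![-3, 3, 0; 1, -1, 1], !![0, 2, 0; 1, -1, 1]],
    ![!![-3, 3, 0; 1, -1, 1], !![0, 2, 0; 1, -1, 1], !![0, 3, 1; 1, 3, 1]],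
    ![!![0, 2, 0; 1, -1, 1], !![0, 3, 1; 1, 3, 1], !![0, 2, 0; 1, -1, 1]]]

lemma CEx_mem : ∀ j0 j1 i j, CEx j0 j1 i j ∈ Set.Icc (mEx i j) (MEx i j) := by
  intro j0 j1 i j
  fin_cases j0 <;> fin_cases j1 <;> fin_cases i <;> fin_cases j <;>
    norm_num [CEx, mEx, MEx]

lemma CEx_det : ∀ j0 j1 (i0 i1 : Fin 2),
    CEx j0 j1 i0 j0 * CEx j0 j1 i1 j1 = CEx j0 j1 i0 j1 * CEx j0 j1 i1 j0 := by
  intro j0 j1 i0 i1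
  fin_cases j0 <;> fin_cases j1 <;> fin_cases i0 <;> fin_cases i1 <;> norm_num [CEx]

/-- A 2×3 matrix with a nonzero 2×2 minor (columns `c0`, `c1`) has rank at least 2. -/
lemma rank_ge_two_of_cols (A : Matrix (Fin 2) (Fin 3) ℝ) (c0 c1 : Fin 3)
    (hdet : A 0 c0 * A 1 c1 - A 0 c1 * A 1 c0 ≠ 0) : 2 ≤ A.rank := by
  classical
  set P : Matrix (Fin 3) (Fin 2) ℝ := Matrix.of fun j k => if j = (![c0, c1] k) then 1 else 0
    with hP
  have hAP : A * P = !![A 0 c0, A 0 c1; A 1 c0, A 1 c1] := by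
    ext i k
    fin_cases i <;> fin_cases k <;>
      simp [Matrix.mul_apply, hP, Fin.sum_univ_three] <;> fin_cases c0 <;> simp
  have hdet' : (A * P).det ≠ 0 := by
    rw [hAP, Matrix.det_fin_two_of]
    exact hdet
  have hunit : IsUnit (A * P) := by
    rw [Matrix.isUnit_iff_isUnit_det]
    exact isUnit_iff_ne_zero.mpr hdet'
  have h2 : (A * P).rank = 2 := by
    rw [Matrix.rank_of_isUnit _ hunit]
    simp
  calc 2 = (A * P).rank := h2.symm
    _ ≤ A.rank := Matrix.rank_mul_le_left A P

/-- The 2×3 interval matrix with rows ([−3,1/3],[2,4],[0,1]) and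
([1,1],[−1,3],[1,1]) contains no rank-one matrix, although all the interval products
μ_{i₁,j₁}·…·μ_{i_h,j_h} and μ_{i₁,j_{σ(1)}}·…·μ_{i_h,j_{σ(h)}} (for 2 ≤ h ≤ 2^{min{2,3}-1})
have nonempty intersection; since the interval product is exactly the set of products,
nonempty intersection is expressed by the existence of pointwise choices with equal
products. -/
theorem counterexample_products_not_sufficient :
    (∀ A : Matrix (Fin 2) (Fin 3) ℝ,
        (∀ i j, A i j ∈ Set.Icc (mEx i j) (MEx i j)) → A.rank ≠ 1) ∧
      (∀ h : ℕ, 2 ≤ h → h ≤ 2 ^ (min 2 3 - 1) →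
        ∀ (iv : Fin h → Fin 2) (jv : Fin h → Fin 3) (σ : Equiv.Perm (Fin h)),
          ∃ x y : Fin h → ℝ,
            (∀ t, x t ∈ Set.Icc (mEx (iv t) (jv t)) (MEx (iv t) (jv t))) ∧
            (∀ t, y t ∈ Set.Icc (mEx (iv t) (jv (σ t))) (MEx (iv t) (jv (σ t)))) ∧
            ∏ t, x t = ∏ t, y t) := by
  constructor
  · -- Part 1: no matrix in μ has rank one.
    intro A hA hr
    have b00 := hA 0 0; have b01 := hA 0 1; have b02 := hA 0 2
    have b10 := hA 1 0; have b11 := hA 1 1; have b12 := hA 1 2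
    simp only [mEx, MEx, Set.mem_Icc, Matrix.cons_val', Matrix.cons_val_zero, Matrix.cons_val_one,
      Matrix.head_cons, Matrix.empty_val', Matrix.cons_val_fin_one, Matrix.head_fin_const,
      Matrix.of_apply, Matrix.cons_val_two, Matrix.tail_cons] at b00 b01 b02 b10 b11 b12
    have h10 : A 1 0 = 1 := le_antisymm b10.2 b10.1
    have h12 : A 1 2 = 1 := le_antisymm b12.2 b12.1
    by_cases hac : A 0 0 = A 0 2
    · have : 2 ≤ A.rank := by
        apply rank_ge_two_of_cols A 0 1
        rw [h10]
        nlinarith [b00.2, b01.1, b02.1, b11.1, b11.2]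
      omega
    · have : 2 ≤ A.rank := by
        apply rank_ge_two_of_cols A 0 2
        rw [h10, h12]
        intro hcon
        apply hac
        linarith
      omega
  · -- Part 2: all pairs of interval products intersect.
    intro h h2 hle
    have hle2 : h ≤ 2 := by simpa using hle
    have hh : h = 2 := by omega
    subst hh
    intro iv jv σ
    set B := CEx (jv 0) (jv 1) with hB
    refine ⟨fun t => B (iv t) (jv t), fun t => B (iv t) (jv (σ t)), fun t => CEx_mem _ _ _ _,
      fun t => CEx_mem _ _ _ _, ?_⟩
    rw [Fin.prod_univ_two, Fin.prod_univ_two]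
    by_cases h0 : σ 0 = 0
    · have h1 : σ 1 = 1 := by
        have := σ.injective.ne (show (0 : Fin 2) ≠ 1 by decide)
        rw [h0] at this
        omega
      rw [h0, h1]
    · have h0' : σ 0 = 1 := by omega
      have h1 : σ 1 = 0 := by
        have := σ.injective.ne (show (0 : Fin 2) ≠ 1 by decide)
        rw [h0'] at this
        omega
      rw [h0', h1]
      exact CEx_det (jv 0) (jv 1) (iv 0) (iv 1)
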